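/- Let n ≥ 0 and m ≥ 2 be natural numbers, and let a₀, …, a_n : ℂ² → ℂ be nonzero linear functionals that are pairwise linearly independent. Then the set of one-dimensional ℂ-linear subspaces T ⊆ ℂ² with the property that for some nonzero t ∈ T there exists a nonzero x ∈ ℂ^{n+1} at which all n+1 formal partial derivatives of the polynomial a₀(t)·X₀^m + ⋯ + a_n(t)·X_n^m vanish, has exactly n+1 elements. -/

import Mathlib

open MvPolynomial

lemma eval_pderiv_fermat (k m : ℕ) (c : Fin k → ℂ) (x : Fin k → ℂ) (i : Fin k) :
    eval x (pderiv i (∑ j : Fin k, C (c j) * X j ^ m)) = c i * (m * x i ^ (m-1)) := by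
  rw [map_sum]
  simp [pderiv_C_mul, pderiv_pow, pderiv_X, Pi.single_apply, Finset.sum_ite_eq', mul_comm]

lemma not_indep_of_ker_eq (f g : (Fin 2 → ℂ) →ₗ[ℂ] ℂ) (hf : f ≠ 0)
    (h : LinearMap.ker f = LinearMap.ker g) : ¬ LinearIndependent ℂ ![f, g] := by
  obtain ⟨s, hs⟩ : ∃ s, f s ≠ 0 := by
    by_contra hc; push_neg at hc; exact hf (LinearMap.ext fun v => by simp [hc])
  set c : ℂ := g s / f s with hc
  have key : g = c • f := by
    refine LinearMap.ext fun v => ?_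
    have hv : v - (f v / f s) • s ∈ LinearMap.ker f := by
      simp [LinearMap.mem_ker, div_mul_cancel₀ _ hs]
    rw [h] at hv
    have h2 := LinearMap.mem_ker.mp hv
    simp only [map_sub, map_smul, smul_eq_mul, sub_eq_zero] at h2
    show g v = c * f v
    rw [h2, hc]
    field_simp
  intro hli
  have h3 := (LinearIndependent.pair_iff.mp hli) c (-1) (by rw [key]; module)
  simpa using h3.2

/-- Example (3.3)(d): a general pencil in the Fermat-type linear system
`⟨x₀^m, …, x_n^m⟩` on `ℙⁿ` (given by pairwise linearly independent nonzero linear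
functionals `a₀, …, a_n` on `ℂ²`) contains exactly `n+1` singular members: the set of
lines `T ⊆ ℂ²` yielding a singular member has exactly `n+1` elements. -/
theorem stmt3 (n m : ℕ) (hm : 2 ≤ m)
    (a : Fin (n + 1) → ((Fin 2 → ℂ) →ₗ[ℂ] ℂ))
    (ha : ∀ i, a i ≠ 0)
    (hind : ∀ i j, i ≠ j → LinearIndependent ℂ ![a i, a j]) :
    {T : Submodule ℂ (Fin 2 → ℂ) |
        Module.finrank ℂ T = 1 ∧
        ∃ t ∈ T, t ≠ 0 ∧
          ∃ x : Fin (n + 1) → ℂ, x ≠ 0 ∧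
            ∀ i : Fin (n + 1),
              eval x (pderiv i (∑ j : Fin (n + 1), C (a j t) * X j ^ m)) = 0}.ncard
      = n + 1 := by
  -- finrank of each kernel is 1
  have hker1 : ∀ i, Module.finrank ℂ (LinearMap.ker (a i)) = 1 := by
    intro i
    obtain ⟨s, hs⟩ : ∃ s, a i s ≠ 0 := by
      by_contra hc; push_neg at hc; exact ha i (LinearMap.ext fun v => by simp [hc])
    have hr : LinearMap.range (a i) = ⊤ := by
      rw [LinearMap.range_eq_top]
      intro z
      exact ⟨(z / a i s) • s, by simp [div_mul_cancel₀ _ hs]⟩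
    have h2 := LinearMap.finrank_range_add_finrank_ker (a i)
    rw [hr] at h2
    simp only [finrank_top, Module.finrank_self] at h2
    have h3 : Module.finrank ℂ (Fin 2 → ℂ) = 2 := by simp
    omega
  have key : {T : Submodule ℂ (Fin 2 → ℂ) |
        Module.finrank ℂ T = 1 ∧
        ∃ t ∈ T, t ≠ 0 ∧
          ∃ x : Fin (n + 1) → ℂ, x ≠ 0 ∧
            ∀ i : Fin (n + 1),
              eval x (pderiv i (∑ j : Fin (n + 1), C (a j t) * X j ^ m)) = 0}
      = Set.range (fun i => LinearMap.ker (a i)) := by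
    ext T
    simp only [Set.mem_setOf_eq, Set.mem_range]
    constructor
    · rintro ⟨hT1, t, htT, ht0, x, hx0, hx⟩
      obtain ⟨i, hxi⟩ := Function.ne_iff.mp hx0
      have hat : a i t = 0 := by
        have h := hx i
        rw [eval_pderiv_fermat] at h
        have hm0 : (m : ℂ) ≠ 0 := Nat.cast_ne_zero.mpr (by omega)
        rcases mul_eq_zero.mp h with h1 | h1
        · exact h1
        · rcases mul_eq_zero.mp h1 with h2 | h2
          · exact absurd h2 hm0
          · exact absurd h2 (pow_ne_zero _ hxi)
      refine ⟨i, ?_⟩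
      have hspan : Submodule.span ℂ {t} = T :=
        Submodule.eq_of_le_of_finrank_eq
          (Submodule.span_le.mpr (by simpa using htT))
          (by rw [finrank_span_singleton ht0, hT1])
      rw [← hspan]
      refine (Submodule.eq_of_le_of_finrank_eq ?_ ?_).symm
      · rw [Submodule.span_le]
        simpa [LinearMap.mem_ker] using hat
      · rw [finrank_span_singleton ht0, hker1]
    · rintro ⟨i, rfl⟩
      refine ⟨hker1 i, ?_⟩
      have hne : LinearMap.ker (a i) ≠ ⊥ := by
        intro hb
        have := hker1 i
        rw [hb] at this
        simp at this
      obtain ⟨t, htT, ht0⟩ := Submodule.exists_mem_ne_zero_of_ne_bot hne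
      refine ⟨t, htT, ht0, Pi.single i 1, ?_, ?_⟩
      · intro hz
        have := congrFun hz i
        simp at this
      · intro j
        rw [eval_pderiv_fermat]
        rcases eq_or_ne j i with rfl | hji
        · have : a j t = 0 := LinearMap.mem_ker.mp htT
          rw [this]; ring
        · rw [Pi.single_eq_of_ne hji, zero_pow (by omega)]; ring
  have hinj : Function.Injective (fun i => LinearMap.ker (a i)) := by
    intro i j hij
    by_contra hne
    exact not_indep_of_ker_eq (a i) (a j) (ha i) hij (hind i j hne)
  rw [key, ← Set.image_univ, Set.ncard_image_of_injective _ hinj, Set.ncard_univ]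
  simp
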